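/- For every real A > 0 and every k ∈ (-d1/d2, 0] with P_X(k) > 0, there is no real number l such that ω(A,k,l) = 0 and P_Y(A,k,l) = 0. -/

import Mathlib

noncomputable section

namespace PaperDefs

/-- The polynomial `P_X`. -/
def PX (d1 d2 k : ℝ) : ℝ :=
  ((d2*(d1*d2 - 2*d1 - d2 + 1)*k^2 + 2*(d2-1)*(d1-1)*d1*k + d1^2*(d1-1))*(1-k))/(d1*(d1+d2-1))

/-- The polynomial `Q_X`. -/
def QX (d1 d2 k : ℝ) : ℝ :=
  4*k*(1 + d2*k/(2*d1))*(d1 + d2*k + d2*k/(2*d1)) +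
    (2 + 2*k + 3*d2*k/d1)*(d1 + d2*k^2 - (d1 + d2*k)^2)/(d1+d2-1)

/-- The coefficient `ω₂`. -/
def omega2 (d1 d2 k : ℝ) : ℝ :=
  (2*d1^2*d2^2 - d1*d2^3 + d2^3 - d2^2)*k^3
    + (4*d1^3*d2 - 4*d1^2*d2^2 - 2*d1^2*d2 + 4*d1*d2^2 - 2*d1*d2)*k^2
    + (2*d1^4 - 5*d1^3*d2 - 2*d1^3 + 5*d1^2*d2)*k - 2*d1^4 + 2*d1^3

/-- The coefficient `ω₁`. -/
def omega1 (d1 d2 k : ℝ) : ℝ :=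
  (d1*d2^3 - 4*d1*d2^2 - d2^3 + 3*d2^2)*k^3
    + (2*d1^2*d2^2 - 8*d1^2*d2 + 8*d1*d2 - 2*d2^2)*k^2
    + (d1^3*d2 - 4*d1^3 + 5*d1^2*d2 + 4*d1^2 - 6*d1*d2)*k + 4*d1^3 - 4*d1^2

/-- The coefficient `ω₀`. -/
def omega0 (d1 d2 k : ℝ) : ℝ :=
  (d1*d2^3 - 2*d1*d2^2 - d2^3 - 2*d1*d2 + d2^2)*k^2
    + (2*d1^2*d2^2 - 2*d1^2*d2 - 2*d1*d2^2 - 4*d1^2 + 4*d1*d2)*k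
    + d1^3*d2 - d1^2*d2 + 4*d1^2

/-- The function `ω(A,k,l)`. -/
def omega (d1 d2 A k l : ℝ) : ℝ :=
  (1/(d1^2*(d1+d2-1))) * (((2*d1 + d2*k)/d2)*omega2 d1 d2 k*A*l^2
    + (d2-1)*k*omega1 d1 d2 k*l - (d1-1)*k^2*omega0 d1 d2 k)

/-- The function `P_Y(A,k,l)`. -/
def PY (d1 d2 A k l : ℝ) : ℝ :=
  -((d1*((d1+d2)+d1-2) + d2*((d1+d2)+d1-1)*k)/(d2*((d1+d2)-1)))*A*l^2
    + ((d2-1)*(d1 + d2*k - 1)/((d1+d2)-1))*l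
    - ((d1-1)*(d1 + d2*k - k)/((d1+d2)-1))

/-- The function `ν₁(A,k)`. -/
def nu1 (d1 d2 A k : ℝ) : ℝ := d2*(d2-1)*k/(d1*A*(2*d1 + d2*k))

/-- The constant `Ψ`. -/
def Psi (d1 d2 : ℝ) : ℝ :=
  ((4*(d1-1)*(d1+d2)^2 + d2^2)*(3*(d1+d2) + d1)/((2*(d1+d2)^2 + (d1+d2) + d1)^2*d1^2))
    *(d2*(d2-1)^2/(4*(d1-1)))

/-- The function `ζ(A,k,l)`. -/
def zeta (d1 d2 A k l : ℝ) : ℝ :=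
  (-((d1 + d2*k)*(d1 + d2*k - 1)*(2*d1 + d2*k))/d2)*A*l^2
    + (((d2-1)/d1)*(d1 + d2*k)*(d2*k^2 + d2*(d1-1)*k + d1*(d1-1))
       - ((1-k)/d1)*((d1*d2^2 - 2*d1*d2 - d2^2 + d2)*k^2
          + (2*d1^2*d2 - 2*d1^2 - 2*d1*d2 + 2*d1)*k + d1^2*(d1-1))
         *(d2 - 1 - 2*d1^2*(d1+1)*A/(d2*(d2-1))))*l
    + (-(k*(d1-1)*(d1 + d2*k)*(d1 + d2*k + 1 - 2*k)))

/-- The polynomial `β₀`. -/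
def beta0 (d1 d2 k : ℝ) : ℝ :=
  (d1*d2^2 - 2*d1*d2 - d2^2 + d2)*k^2 + (2*d1^2*d2 - 2*d1^2 - d1*d2 + 2*d1)*k + d1^3 - d1

/-- The polynomial `β₁`. -/
def beta1 (d1 d2 k : ℝ) : ℝ :=
  (2*d1^2*d2^2 + d1*d2^3 - 4*d1^2*d2 - 2*d1*d2^2 - d2^3 - 2*d1*d2 + 2*d2)*k^2
    + (4*d1^3*d2 + 2*d1^2*d2^2 - 4*d1^3 - 2*d1^2*d2 - 3*d1*d2^2 + 4*d1*d2 + d2^2 + 4*d1 - 2*d2)*k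
    + 2*d1^4 + d1^3*d2 - 2*d1^2*d2 + 2*d1^2 + d1*d2 - 4*d1

/-- The polynomial `β₂`. -/
def beta2 (d1 d2 k : ℝ) : ℝ :=
  (d1*d2^3 - 2*d1*d2^2 - d2^3 + d2^2)*k^3
    + (2*d1^2*d2^2 - 4*d1^2*d2 - 2*d1*d2^2 + 2*d1*d2)*k^2
    + (d1^3*d2 - 2*d1^3 + d1^2*d2)*k + 2*d1^3

/-- The polynomial `ρ₁`. -/
def rho1 (d1 d2 k : ℝ) : ℝ :=
  4*d1^2*(d1-1)*(2*d2^2*k^2 + d2*k^2 + 4*d1*d2*k + 2*d1*k + 2*d1^2)^2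

/-- The polynomial `ρ₀`. -/
def rho0 (d1 d2 k : ℝ) : ℝ :=
  (d2-1)^2*k*d2*(4*d1 + 3*d2*k)*(4*(d1-1)*(d1 + d2*k)^2 + d2^2*k^2)

/-- The function `Ω`. -/
def OmegaFun (d1 d2 k : ℝ) : ℝ :=
  -(omega1 d1 d2 k^2*d2*(d2-1)^2)/(4*(d1-1)*(2*d1 + d2*k)*omega0 d1 d2 k*omega2 d1 d2 k)

/-- The polynomial `α₄`. -/
def alpha4 (d1 d2 k : ℝ) : ℝ :=
  (-d1^3*d2^3 + d1^2*d2^4 + 4*d1^3*d2^2 - 2*d1^2*d2^3 - 2*d1*d2^4 - d1^2*d2^2 + 4*d1*d2^3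
      + d2^4 - d1*d2^2 - d2^3)*k^3
    + (-2*d1^4*d2^2 + 4*d1^3*d2^3 + 8*d1^4*d2 - 8*d1^3*d2^2 - 8*d1^2*d2^3 - 8*d1^3*d2
      + 14*d1^2*d2^2 + 4*d1*d2^3 - 4*d1*d2^2)*k^2
    + (-d1^5*d2 + 5*d1^4*d2^2 + 4*d1^5 - 10*d1^4*d2 - 10*d1^3*d2^2 - 8*d1^4 + 17*d1^3*d2
      + 5*d1^2*d2^2 + 4*d1^3 - 6*d1^2*d2)*k
    + 2*d1^5*d2 - 4*d1^5 - 4*d1^4*d2 + 8*d1^4 + 2*d1^3*d2 - 4*d1^3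

/-- The function `ω̃₂`. -/
def omegaTilde2 (d1 d2 κ : ℝ) : ℝ :=
  1 + (d1-1)*(1-κ)*((-2*d1 + d2 - 2)*κ^2 + (2*d1 - 3*d2)*κ + 2*d2)/κ^3

/-- The factor `θ_{2a}`. -/
def theta2a (d1 d2 k : ℝ) : ℝ :=
  (d1*d2^3 - 2*d1*d2^2 - d2^3 - 2*d1*d2 + d2^2)*k^2
    + (2*d1^2*d2^2 - 2*d1^2*d2 - 2*d1*d2^2 - 4*d1^2 + 4*d1*d2)*k
    + d1^3*d2 - d1^2*d2 + 4*d1^2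

/-- The factor `θ_{2b}`. -/
def theta2b (d1 d2 k : ℝ) : ℝ :=
  (2*d1^2*d2^2 - d1*d2^3 + d2^3 - d2^2)*k^3
    + (4*d1^3*d2 - 4*d1^2*d2^2 - 2*d1^2*d2 + 4*d1*d2^2 - 2*d1*d2)*k^2
    + (2*d1^4 - 5*d1^3*d2 - 2*d1^3 + 5*d1^2*d2)*k - 2*d1^4 + 2*d1^3

/-- The factor `θ_{0a}`. -/
def theta0a (d1 d2 k : ℝ) : ℝ :=
  k*d2^2*(d2-1)^4*(2*d1 + d2*k)*((2*d1*d2 - 2*d1 + d2)*k + 2*d1^2 + 2*d1)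

/-- The factor `θ_{0b}`. -/
def theta0b (d1 d2 k : ℝ) : ℝ :=
  (2*d1^2 - 1)*d2^2*k^2 + (4*d1^3 - 2*d1^2 - 2*d1)*d2*k + 2*d1^3*(d1-1)

/-- The coefficient `θ₂`. -/
def theta2 (d1 d2 k : ℝ) : ℝ := 4*d1^4*(d1+1)^2*theta2a d1 d2 k*theta2b d1 d2 k

/-- The coefficient `θ₀`. -/
def theta0 (d1 d2 k : ℝ) : ℝ := theta0a d1 d2 k*theta0b d1 d2 k

/-- The function `F` of Statement 18. -/
def Ffun (d1 d2 k : ℝ) : ℝ :=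
  d2*(d2-1)^2*beta2 d1 d2 k/(d1^2*(2*d1 + d2*k)*omega0 d1 d2 k)

end PaperDefs

open PaperDefs

set_option maxHeartbeats 4000000 in
/-- for every `A > 0` and every `k ∈ (-d1/d2, 0]` with `P_X(k) > 0`,
there is no real `l` with `ω(A,k,l) = 0` and `P_Y(A,k,l) = 0`. -/
theorem statement6 (d1 d2 : ℕ) (h1 : 2 ≤ d1) (h2 : d1 ≤ d2) (A : ℝ) (hA : 0 < A) :
    ∀ k ∈ Set.Ioc (-(d1:ℝ)/(d2:ℝ)) 0, 0 < PX d1 d2 k →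
      ¬ ∃ l : ℝ, omega d1 d2 A k l = 0 ∧ PY d1 d2 A k l = 0 := by
  intro k hk hPX
  rintro ⟨l, hw, hy⟩
  obtain ⟨hk1, hk2⟩ := hk
  have hd1R : (2:ℝ) ≤ (d1:ℝ) := by exact_mod_cast h1
  have hd2R : (d1:ℝ) ≤ (d2:ℝ) := by exact_mod_cast h2
  have hd1pos : (0:ℝ) < (d1:ℝ) := by linarith
  have hd2pos : (0:ℝ) < (d2:ℝ) := by linarith
  have hd1ne : (d1:ℝ) ≠ 0 := ne_of_gt hd1pos
  have hd2ne : (d2:ℝ) ≠ 0 := ne_of_gt hd2pos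
  have hnpos : (0:ℝ) < (d1:ℝ) + (d2:ℝ) - 1 := by linarith
  have hnne : (d1:ℝ) + (d2:ℝ) - 1 ≠ 0 := ne_of_gt hnpos
  have h1k : (0:ℝ) < 1 - k := by linarith
  have hu : (0:ℝ) < (d1:ℝ) + (d2:ℝ)*k := by
    have h := (div_lt_iff₀ hd2pos).mp hk1
    nlinarith [h]
  -- positivity of the core polynomial C from PX > 0
  have hCnum : (0:ℝ) < ((d2:ℝ)*((d1:ℝ)*(d2:ℝ) - 2*(d1:ℝ) - (d2:ℝ) + 1)*k^2
      + 2*((d2:ℝ)-1)*((d1:ℝ)-1)*(d1:ℝ)*k + (d1:ℝ)^2*((d1:ℝ)-1))*(1-k) := by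
    have hden : (0:ℝ) < (d1:ℝ)*((d1:ℝ)+(d2:ℝ)-1) := by positivity
    have heq : ((d2:ℝ)*((d1:ℝ)*(d2:ℝ) - 2*(d1:ℝ) - (d2:ℝ) + 1)*k^2
        + 2*((d2:ℝ)-1)*((d1:ℝ)-1)*(d1:ℝ)*k + (d1:ℝ)^2*((d1:ℝ)-1))*(1-k)
        = PX d1 d2 k * ((d1:ℝ)*((d1:ℝ)+(d2:ℝ)-1)) := by
      rw [PX]; field_simp
    rw [heq]
    exact mul_pos hPX hden
  have hC : (0:ℝ) < (d2:ℝ)*((d1:ℝ)*(d2:ℝ) - 2*(d1:ℝ) - (d2:ℝ) + 1)*k^2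
      + 2*((d2:ℝ)-1)*((d1:ℝ)-1)*(d1:ℝ)*k + (d1:ℝ)^2*((d1:ℝ)-1) := by
    nlinarith [hCnum, h1k]
  -- the cleared-denominator coefficients
  set a2 : ℝ := (2*(d1:ℝ) + (d2:ℝ)*k)*omega2 d1 d2 k*A with ha2
  set a1 : ℝ := (d2:ℝ)*((d2:ℝ)-1)*k*omega1 d1 d2 k with ha1
  set a0 : ℝ := -((d2:ℝ)*((d1:ℝ)-1)*k^2*omega0 d1 d2 k) with ha0
  set b2 : ℝ := -(((d1:ℝ)*(((d1:ℝ)+(d2:ℝ))+(d1:ℝ)-2) + (d2:ℝ)*(((d1:ℝ)+(d2:ℝ))+(d1:ℝ)-1)*k)*A) with hb2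
  set b1 : ℝ := (d2:ℝ)*((d2:ℝ)-1)*((d1:ℝ) + (d2:ℝ)*k - 1) with hb1
  set b0 : ℝ := -((d2:ℝ)*((d1:ℝ)-1)*((d1:ℝ) + (d2:ℝ)*k - k)) with hb0
  have hW0 : a2*l^2 + a1*l + a0 = 0 := by
    have hkey : (d2:ℝ)*((d1:ℝ)^2*((d1:ℝ)+(d2:ℝ)-1)) * omega d1 d2 A k l
        = a2*l^2 + a1*l + a0 := by
      rw [ha2, ha1, ha0, omega]
      field_simp
      ring
    rw [← hkey, hw, mul_zero]
  have hY0 : b2*l^2 + b1*l + b0 = 0 := by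
    have hkey : (d2:ℝ)*(((d1:ℝ)+(d2:ℝ))-1) * PY d1 d2 A k l
        = b2*l^2 + b1*l + b0 := by
      rw [hb2, hb1, hb0, PY]
      field_simp
      ring
    rw [← hkey, hy, mul_zero]
  have h3 : (a2*b1 - a1*b2)*l + (a2*b0 - a0*b2) = 0 := by
    linear_combination a2*hY0 - b2*hW0
  have h4 : (a2*b1 - a1*b2)*l^2 - (a1*b0 - a0*b1) = 0 := by
    linear_combination b1*hW0 - a1*hY0
  have hR : (a2*b0 - a0*b2)^2 - (a2*b1 - a1*b2)*(a1*b0 - a0*b1) = 0 := by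
    linear_combination ((a2*b0 - a0*b2) - (a2*b1 - a1*b2)*l)*h3 + (a2*b1 - a1*b2)*h4
  -- positivity of E
  have h43 : (0:ℝ) < 4*(d1:ℝ) + 3*(d2:ℝ)*k := by nlinarith [hu]
  have ht1 : (0:ℝ) ≤ 4*((d1:ℝ)-1)^2*(d1:ℝ)^2*(d2:ℝ)^2
      *((d2:ℝ)*(2*(d2:ℝ)+1)*k^2 + 2*(d1:ℝ)*(2*(d2:ℝ)+1)*k + 2*(d1:ℝ)^2)^2*A := by
    have h0 : (0:ℝ) ≤ ((d1:ℝ)-1)^2 := sq_nonneg _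
    have h5 : (0:ℝ) ≤ ((d2:ℝ)*(2*(d2:ℝ)+1)*k^2 + 2*(d1:ℝ)*(2*(d2:ℝ)+1)*k + 2*(d1:ℝ)^2)^2 :=
      sq_nonneg _
    nlinarith [mul_nonneg (mul_nonneg (mul_nonneg (mul_nonneg (mul_nonneg (by norm_num : (0:ℝ) ≤ 4) h0) (sq_nonneg (d1:ℝ))) (sq_nonneg (d2:ℝ))) h5) hA.le]
  have hE : (0:ℝ) < 4*((d1:ℝ)-1)^2*(d1:ℝ)^2*(d2:ℝ)^2
      *((d2:ℝ)*(2*(d2:ℝ)+1)*k^2 + 2*(d1:ℝ)*(2*(d2:ℝ)+1)*k + 2*(d1:ℝ)^2)^2*A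
      + k*((d2:ℝ)-1)^2*((d1:ℝ)-1)*(d2:ℝ)^3*(4*(d1:ℝ)+3*(d2:ℝ)*k)
        *((3-4*(d1:ℝ))*(d2:ℝ)^2*k^2 + 8*(d1:ℝ)*(1-(d1:ℝ))*(d2:ℝ)*k + 4*(d1:ℝ)^2*(1-(d1:ℝ))) := by
    have hd1m1 : (0:ℝ) < (d1:ℝ) - 1 := by linarith
    have hd2m1 : (0:ℝ) < (d2:ℝ) - 1 := by linarith
    rcases lt_or_eq_of_le hk2 with hklt | hkeq
    · -- k < 0
      have hg1 : (3-4*(d1:ℝ))*(d2:ℝ)^2*k^2 + 8*(d1:ℝ)*(1-(d1:ℝ))*(d2:ℝ)*k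
          + 4*(d1:ℝ)^2*(1-(d1:ℝ)) < 0 := by
        have hsq := sq_nonneg ((4*(d1:ℝ)-3)*(d2:ℝ)*k + 4*(d1:ℝ)*((d1:ℝ)-1))
        have hp : (0:ℝ) < 4*(d1:ℝ)^2*((d1:ℝ)-1) := by positivity
        have h4p : (0:ℝ) < 4*(d1:ℝ)-3 := by linarith
        have hid : (4*(d1:ℝ)-3)*((3-4*(d1:ℝ))*(d2:ℝ)^2*k^2 + 8*(d1:ℝ)*(1-(d1:ℝ))*(d2:ℝ)*k
            + 4*(d1:ℝ)^2*(1-(d1:ℝ))) = -((4*(d1:ℝ)-3)*(d2:ℝ)*k + 4*(d1:ℝ)*((d1:ℝ)-1))^2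
            - 4*(d1:ℝ)^2*((d1:ℝ)-1) := by ring
        by_contra hcon
        push_neg at hcon
        have := mul_nonneg h4p.le hcon
        linarith
      have hkg : (0:ℝ) < k*((3-4*(d1:ℝ))*(d2:ℝ)^2*k^2 + 8*(d1:ℝ)*(1-(d1:ℝ))*(d2:ℝ)*k
          + 4*(d1:ℝ)^2*(1-(d1:ℝ))) := mul_pos_of_neg_of_neg hklt hg1
      have hpos2 : (0:ℝ) < ((d2:ℝ)-1)^2*((d1:ℝ)-1)*(d2:ℝ)^3*(4*(d1:ℝ)+3*(d2:ℝ)*k) :=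
        mul_pos (mul_pos (mul_pos (pow_pos hd2m1 2) hd1m1) (pow_pos hd2pos 3)) h43
      nlinarith [mul_pos hpos2 hkg, ht1]
    · -- k = 0
      subst hkeq
      nlinarith [mul_pos (mul_pos (mul_pos (mul_pos (mul_pos
        (by norm_num : (0:ℝ) < 4) (pow_pos hd1m1 2)) (pow_pos hd1pos 2))
        (pow_pos hd2pos 2)) (pow_pos (by nlinarith : (0:ℝ) < 2*(d1:ℝ)^2) 2)) hA]
  have hident : (a2*b0 - a0*b2)^2 - (a2*b1 - a1*b2)*(a1*b0 - a0*b1)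
      = A*(1-k)^2*((d2:ℝ)*((d1:ℝ)*(d2:ℝ) - 2*(d1:ℝ) - (d2:ℝ) + 1)*k^2
          + 2*((d2:ℝ)-1)*((d1:ℝ)-1)*(d1:ℝ)*k + (d1:ℝ)^2*((d1:ℝ)-1))^2
        *(4*((d1:ℝ)-1)^2*(d1:ℝ)^2*(d2:ℝ)^2
            *((d2:ℝ)*(2*(d2:ℝ)+1)*k^2 + 2*(d1:ℝ)*(2*(d2:ℝ)+1)*k + 2*(d1:ℝ)^2)^2*A
          + k*((d2:ℝ)-1)^2*((d1:ℝ)-1)*(d2:ℝ)^3*(4*(d1:ℝ)+3*(d2:ℝ)*k)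
            *((3-4*(d1:ℝ))*(d2:ℝ)^2*k^2 + 8*(d1:ℝ)*(1-(d1:ℝ))*(d2:ℝ)*k
              + 4*(d1:ℝ)^2*(1-(d1:ℝ)))) := by
    rw [ha2, ha1, ha0, hb2, hb1, hb0]
    simp only [omega2, omega1, omega0]
    ring
  have hfinal : (0:ℝ) < (a2*b0 - a0*b2)^2 - (a2*b1 - a1*b2)*(a1*b0 - a0*b1) := by
    rw [hident]
    have hCsq : (0:ℝ) < ((d2:ℝ)*((d1:ℝ)*(d2:ℝ) - 2*(d1:ℝ) - (d2:ℝ) + 1)*k^2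
        + 2*((d2:ℝ)-1)*((d1:ℝ)-1)*(d1:ℝ)*k + (d1:ℝ)^2*((d1:ℝ)-1))^2 := by positivity
    have h1ksq : (0:ℝ) < (1-k)^2 := by positivity
    exact mul_pos (mul_pos (mul_pos hA h1ksq) hCsq) hE
  linarith [hR, hfinal]
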